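/- Let a = diag(1,1,ω,ω,ω²,ω²) ∈ GL_6(ℂ) with ω = e^{2πi/3}, and let b be the given 6×6 matrix with entries in (1/3)ℤ[ω]. Then (abab⁻¹)² = ω·I_6, i.e. the square of the commutator-type element abab⁻¹ is the scalar matrix ω·I. -/

import Mathlib

@[simp]
lemma Matrix.cons_val_five' {α : Type*} {m : ℕ} (x : α) (u : Fin m.succ.succ.succ.succ.succ → α) :
    Matrix.vecCons x u 5 =
      Matrix.vecHead (Matrix.vecTail (Matrix.vecTail (Matrix.vecTail (Matrix.vecTail u)))) :=
  rfl

noncomputable def ω : ℂ := Complex.exp (2 * Real.pi * Complex.I / 3)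

noncomputable def matA : Matrix (Fin 6) (Fin 6) ℂ :=
  Matrix.diagonal ![1, 1, ω, ω, ω ^ 2, ω ^ 2]

noncomputable def matB : Matrix (Fin 6) (Fin 6) ℂ :=
  (3 : ℂ)⁻¹ • Matrix.of
    ![![-1, 0, -ω, 0, 3 * ω ^ 2, 2 * ω ^ 2],
      ![2, 0, 2 * ω, 0, 0, -ω ^ 2],
      ![-ω ^ 2, 0, 2, 3, 0, -ω],
      ![2 * ω ^ 2, 0, -1, 0, 0, 2 * ω],
      ![2 * ω, 3 * ω, -ω ^ 2, 0, 0, -1],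
      ![-ω, 0, 2 * ω ^ 2, 0, 0, 2]]

lemma omega_cube : ω ^ 3 = 1 := by
  have h := Complex.exp_nat_mul (2 * Real.pi * Complex.I / 3) 3
  rw [ω, ← h, show ((3:ℕ):ℂ) * (2 * ↑Real.pi * Complex.I / 3) = 2 * ↑Real.pi * Complex.I by
    push_cast; ring, Complex.exp_two_pi_mul_I]

lemma omega_ne_one : ω ≠ 1 := by
  intro h
  rw [ω, Complex.exp_eq_one_iff] at h
  obtain ⟨n, hn⟩ := h
  have hpi : (Real.pi : ℂ) ≠ 0 := by exact_mod_cast Real.pi_ne_zero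
  have key : (n : ℂ) * 3 = 1 := by
    have h2 : (2 : ℂ) * ↑Real.pi * Complex.I ≠ 0 :=
      mul_ne_zero (mul_ne_zero two_ne_zero hpi) Complex.I_ne_zero
    field_simp at hn
    apply mul_left_cancel₀ h2
    rw [show 2 * (Real.pi:ℂ) * Complex.I * ((n:ℂ)*3) = ↑n * (2 * ↑Real.pi * Complex.I) * 3 by
      ring, hn]
    ring
  have hre : ((n:ℂ) * 3).re = 1 := by rw [key]; simp
  simp at hre
  have h1 : (3:ℝ) * n = 1 := by linarith
  rcases Int.lt_or_le n 1 with h | h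
  · have : (n : ℝ) ≤ 0 := by exact_mod_cast Int.lt_add_one_iff.mp h
    nlinarith
  · have : (1 : ℝ) ≤ (n : ℝ) := by exact_mod_cast h
    nlinarith

lemma omega_sq : ω ^ 2 = -1 - ω := by
  have h : (ω - 1) * (ω ^ 2 + ω + 1) = 0 := by linear_combination omega_cube
  rcases mul_eq_zero.mp h with h' | h'
  · exact absurd (sub_eq_zero.mp h') omega_ne_one
  · linear_combination h'

noncomputable def matC : Matrix (Fin 6) (Fin 6) ℂ := Matrix.of
  ![![0, ((2/3)), 0, ((2/3)*ω), 0, ((1/3) + (1/3)*ω)],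
    ![0, ((-1/3)), 0, ((-1/3)*ω), ((-1) + (-1)*ω), ((-2/3) + (-2/3)*ω)],
    ![0, ((-2/3) + (-2/3)*ω), 0, ((-1/3)), 0, ((2/3)*ω)],
    ![0, ((1/3) + (1/3)*ω), ((1)), ((2/3)), 0, ((-1/3)*ω)],
    ![((1)*ω), ((2/3)*ω), 0, ((1/3) + (1/3)*ω), 0, ((-1/3))],
    ![0, ((-1/3)*ω), 0, ((-2/3) + (-2/3)*ω), 0, ((2/3))]]

noncomputable def matAB : Matrix (Fin 6) (Fin 6) ℂ := Matrix.of
  ![![((-1/3)), 0, ((-1/3)*ω), 0, ((-1) + (-1)*ω), ((-2/3) + (-2/3)*ω)],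
    ![((2/3)), 0, ((2/3)*ω), 0, 0, ((1/3) + (1/3)*ω)],
    ![((-1/3)), 0, ((2/3)*ω), ((1)*ω), 0, ((1/3) + (1/3)*ω)],
    ![((2/3)), 0, ((-1/3)*ω), 0, 0, ((-2/3) + (-2/3)*ω)],
    ![((2/3)), ((1)), ((-1/3)*ω), 0, 0, ((1/3) + (1/3)*ω)],
    ![((-1/3)), 0, ((2/3)*ω), 0, 0, ((-2/3) + (-2/3)*ω)]]

noncomputable def matQ : Matrix (Fin 6) (Fin 6) ℂ := Matrix.of
  ![![0, ((2/3)), 0, ((2/3)*ω), 0, ((1/3) + (1/3)*ω)],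
    ![0, ((-1/3)), 0, ((-1/3)*ω), ((-1) + (-1)*ω), ((-2/3) + (-2/3)*ω)],
    ![0, ((2/3)), 0, ((-1/3)*ω), 0, ((-2/3) + (-2/3)*ω)],
    ![0, ((-1/3)), ((1)*ω), ((2/3)*ω), 0, ((1/3) + (1/3)*ω)],
    ![((1)), ((2/3)), 0, ((-1/3)*ω), 0, ((1/3) + (1/3)*ω)],
    ![0, ((-1/3)), 0, ((2/3)*ω), 0, ((-2/3) + (-2/3)*ω)]]

noncomputable def matP : Matrix (Fin 6) (Fin 6) ℂ := Matrix.of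
  ![![((-1) + (-1)*ω), ((-2/3) + (-2/3)*ω), 0, ((-1/3)*ω), 0, ((-1/3))],
    ![0, ((1/3) + (1/3)*ω), 0, ((2/3)*ω), 0, ((2/3))],
    ![0, ((-1/3)), ((-1) + (-1)*ω), ((-2/3) + (-2/3)*ω), 0, ((-1/3)*ω)],
    ![0, ((2/3)), 0, ((1/3) + (1/3)*ω), 0, ((2/3)*ω)],
    ![0, ((-1/3)*ω), 0, ((-1/3)), ((-1) + (-1)*ω), ((-2/3) + (-2/3)*ω)],
    ![0, ((2/3)*ω), 0, ((2/3)), 0, ((1/3) + (1/3)*ω)]]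

set_option maxHeartbeats 2000000 in
lemma hBC : matB * matC = 1 := by
  have h2 := omega_sq
  have h3 := omega_cube
  have h4 : ω ^ 4 = ω := by linear_combination ω * h3
  ext i j
  fin_cases i <;> fin_cases j
  all_goals simp [matB, matC, Matrix.mul_apply, Fin.sum_univ_six, Matrix.one_apply,
    Matrix.vecHead, Matrix.vecTail]
  all_goals (try ring_nf) <;> (try simp only [h2, h3, h4]) <;> try ring

lemma hinv : matB⁻¹ = matC := Matrix.inv_eq_right_inv hBC

set_option maxHeartbeats 2000000 in
lemma hAB : matA * matB = matAB := by
  have h2 := omega_sq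
  have h3 := omega_cube
  have h4 : ω ^ 4 = ω := by linear_combination ω * h3
  ext i j
  fin_cases i <;> fin_cases j
  all_goals simp [matA, matB, matAB, Matrix.mul_apply, Fin.sum_univ_six, Matrix.diagonal,
    Matrix.vecHead, Matrix.vecTail]
  all_goals (try ring_nf) <;> (try simp only [h2, h3, h4]) <;> try ring

set_option maxHeartbeats 2000000 in
lemma hQ : matA * matC = matQ := by
  have h2 := omega_sq
  have h3 := omega_cube
  have h4 : ω ^ 4 = ω := by linear_combination ω * h3
  ext i j
  fin_cases i <;> fin_cases j
  all_goals simp [matA, matC, matQ, Matrix.mul_apply, Fin.sum_univ_six, Matrix.diagonal,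
    Matrix.vecHead, Matrix.vecTail]
  all_goals (try ring_nf) <;> (try simp only [h2, h3, h4]) <;> try ring

set_option maxHeartbeats 2000000 in
lemma hP : matAB * matQ = matP := by
  have h2 := omega_sq
  have h3 := omega_cube
  have h4 : ω ^ 4 = ω := by linear_combination ω * h3
  ext i j
  fin_cases i <;> fin_cases j
  all_goals simp [matAB, matQ, matP, Matrix.mul_apply, Fin.sum_univ_six,
    Matrix.vecHead, Matrix.vecTail]
  all_goals (try ring_nf) <;> (try simp only [h2, h3, h4]) <;> try ring

set_option maxHeartbeats 2000000 in
lemma hPP : matP * matP = ω • (1 : Matrix (Fin 6) (Fin 6) ℂ) := by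
  have h2 := omega_sq
  have h3 := omega_cube
  have h4 : ω ^ 4 = ω := by linear_combination ω * h3
  ext i j
  fin_cases i <;> fin_cases j
  all_goals simp [matP, Matrix.mul_apply, Fin.sum_univ_six, Matrix.one_apply,
    Matrix.vecHead, Matrix.vecTail]
  all_goals (try ring_nf) <;> (try simp only [h2, h3, h4]) <;> try ring

theorem abab_inv_sq_eq_omega_smul_one :
    (matA * matB * matA * matB⁻¹) ^ 2 = ω • (1 : Matrix (Fin 6) (Fin 6) ℂ) := by
  rw [hinv]
  have h : matA * matB * matA * matC = matP := by
    rw [show matA * matB * matA * matC = (matA * matB) * (matA * matC) by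
      rw [mul_assoc, mul_assoc], hAB, hQ, hP]
  rw [h, sq, hPP]
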